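/- Let T be a self-adjoint operator on a complex Hilbert space H and Q an orthogonal projection on H. If (T + iQ − z)ψ = 0 for some ψ ≠ 0 and z ∉ ℝ, then dist(Re z, σ(T)) ≤ √(Im z (1 − Im z)). -/

import Mathlib

open scoped ComplexInnerProductSpace

noncomputable section

variable {H : Type*} [NormedAddCommGroup H] [InnerProductSpace ℂ H] [CompleteSpace H]

/-- The resolvent set of a (possibly unbounded) operator given as a `LinearPMap`. -/
def pmResolventSet (T : H →ₗ.[ℂ] H) : Set ℂ :=
  {z | ∃ R : H →L[ℂ] H, (∀ y : H, ∃ hy : R y ∈ T.domain, T ⟨R y, hy⟩ - z • R y = y) ∧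
        ∀ x : T.domain, R (T x - z • (x : H)) = x}

/-- The spectrum of a (possibly unbounded) operator given as a `LinearPMap`. -/
def pmSpectrum (T : H →ₗ.[ℂ] H) : Set ℂ := (pmResolventSet T)ᶜ

set_option maxHeartbeats 1000000 in
/-- If `(T + iQ - z)ψ = 0` with `ψ ≠ 0` and `z ∉ ℝ`, where `T` is self-adjoint and `Q` is an
orthogonal projection, then `dist(Re z, σ(T)) ≤ √(Im z (1 - Im z))`. -/
theorem stmt_9
    (T : H →ₗ.[ℂ] H) (hsa : IsSelfAdjoint T)
    (Q : H →L[ℂ] H) (hQsa : IsSelfAdjoint Q) (hQidem : IsIdempotentElem Q)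
    (z : ℂ) (hz : z.im ≠ 0)
    (ψ : T.domain) (hψ : ψ ≠ 0)
    (heig : T ψ + Complex.I • Q (ψ : H) - z • (ψ : H) = 0) :
    Metric.infDist ((z.re : ℂ)) (pmSpectrum T) ≤ Real.sqrt (z.im * (1 - z.im)) := by
  classical
  set b : ℝ := z.im with hb
  have hψH : (ψ : H) ≠ 0 := fun h => hψ (Subtype.coe_injective h)
  set n : ℝ := ‖(ψ : H)‖ with hn'
  have hn : 0 < n := norm_pos_iff.mpr hψH
  -- symmetry of `T`
  have hden : Dense (T.domain : Set H) := hsa.dense_domain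
  have hsymm : ∀ x y : T.domain, ⟪T x, (y : H)⟫ = ⟪(x : H), T y⟫ := by
    have h := LinearPMap.adjoint_isFormalAdjoint (T := T) hden
    rw [LinearPMap.isSelfAdjoint_def.mp hsa] at h
    exact h
  -- `⟪ψ, Qψ⟫` is `‖Qψ‖²`
  set q : ℝ := ‖Q (ψ : H)‖ ^ 2 with hq'
  have hQψ : ⟪(ψ : H), Q (ψ : H)⟫ = (q : ℂ) := by
    have h1 : Q (Q (ψ : H)) = Q (ψ : H) := by
      have := congrArg (fun (S : H →L[ℂ] H) => S (ψ : H)) hQidem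
      simpa [ContinuousLinearMap.mul_apply] using this
    calc ⟪(ψ : H), Q (ψ : H)⟫ = ⟪(ψ : H), Q (Q (ψ : H))⟫ := by rw [h1]
      _ = ⟪Q (ψ : H), Q (ψ : H)⟫ := (hQsa.isSymmetric _ _).symm
      _ = (q : ℂ) := by rw [inner_self_eq_norm_sq_to_K]; norm_cast
  -- `⟪ψ, Tψ⟫` is real
  have hc : (⟪(ψ : H), T ψ⟫).im = 0 := by
    have h1 : (starRingEnd ℂ) ⟪(ψ : H), T ψ⟫ = ⟪(ψ : H), T ψ⟫ := by
      rw [inner_conj_symm]; exact hsymm ψ ψ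
    have h2 := congrArg Complex.im h1
    rw [Complex.conj_im] at h2
    linarith
  -- imaginary part of the eigenvalue equation gives `q = b n²`
  have hEq : ⟪(ψ : H), T ψ⟫ + Complex.I * (q : ℂ) - z * ((n : ℝ) : ℂ) ^ 2 = 0 := by
    have h0 := congrArg (fun v => ⟪(ψ : H), v⟫) heig
    simpa [inner_add_right, inner_sub_right, inner_smul_right, hQψ,
      inner_self_eq_norm_sq_to_K, hn'] using h0
  have hqbn : q = b * n ^ 2 := by
    have him := congrArg Complex.im hEq
    simp only [Complex.add_im, Complex.sub_im, Complex.mul_im, Complex.I_re, Complex.I_im,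
      Complex.ofReal_re, Complex.ofReal_im, Complex.zero_im, pow_two] at him
    simp only [Complex.mul_re, Complex.mul_im, Complex.ofReal_re, Complex.ofReal_im, hc] at him
    rw [← hb] at him
    nlinarith [him]
  -- the vector `v = Tψ - (Re z) ψ` and its norm
  set v : H := T ψ - ((z.re : ℝ) : ℂ) • (ψ : H) with hv'
  have hTψ : T ψ = z • (ψ : H) - Complex.I • Q (ψ : H) :=
    eq_sub_of_add_eq (sub_eq_zero.mp heig)
  have hvI : v = Complex.I • (((b : ℝ) : ℂ) • (ψ : H) - Q (ψ : H)) := by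
    rw [hv', hTψ]
    have hz' : z - ((z.re : ℝ) : ℂ) = Complex.I * ((b : ℝ) : ℂ) := by
      apply Complex.ext <;> simp [hb]
    have : z • (ψ : H) - ((z.re : ℝ) : ℂ) • (ψ : H) = (z - ((z.re : ℝ) : ℂ)) • (ψ : H) := by
      rw [sub_smul]
    rw [sub_right_comm, this, hz']
    rw [smul_sub, smul_smul]
  have hvnorm_sq : ‖v‖ ^ 2 = b * (1 - b) * n ^ 2 := by
    have h1 : ‖v‖ = ‖((b : ℝ) : ℂ) • (ψ : H) - Q (ψ : H)‖ := by
      rw [hvI, norm_smul]; simp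
    have h3 : ⟪((b : ℝ) : ℂ) • (ψ : H), Q (ψ : H)⟫ = ((b * q : ℝ) : ℂ) := by
      rw [inner_smul_left, hQψ, Complex.conj_ofReal]
      norm_cast
    rw [h1, norm_sub_sq (𝕜 := ℂ), h3]
    simp only [RCLike.re_to_complex, Complex.ofReal_re, norm_smul, Complex.norm_real,
      Real.norm_eq_abs, mul_pow, sq_abs]
    rw [← hn', ← hq', hqbn]
    ring
  have hn2 : 0 < n ^ 2 := by positivity
  have hbb : 0 ≤ b * (1 - b) := by nlinarith [sq_nonneg ‖v‖, hvnorm_sq, hn2]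
  set ε : ℝ := Real.sqrt (b * (1 - b)) with hε'
  have hε0 : 0 ≤ ε := Real.sqrt_nonneg _
  have hvnorm : ‖v‖ = ε * n := by
    have h1 : ‖v‖ ^ 2 = (ε * n) ^ 2 := by
      rw [hvnorm_sq, mul_pow, hε', Real.sq_sqrt hbb]
    have h2 : 0 ≤ ε * n := by positivity
    nlinarith [norm_nonneg v]
  -- main argument by contradiction
  by_contra hcon
  push_neg at hcon
  set D : ℝ := Metric.infDist ((z.re : ℂ)) (pmSpectrum T) with hD'
  set d : ℝ := (ε + D) / 2 with hd'
  have hεd : ε < d := by rw [hd']; linarith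
  have hdD : d < D := by rw [hd']; linarith
  have hd0 : 0 < d := lt_of_le_of_lt hε0 hεd
  -- points within distance `D` of `Re z` are in the resolvent set
  have hres : ∀ w : ℂ, dist ((z.re : ℂ)) w < D → w ∈ pmResolventSet T := by
    intro w hw
    by_contra hw'
    have hmem : w ∈ pmSpectrum T := hw'
    have hle : D ≤ dist ((z.re : ℂ)) w := by
      rw [hD']
      exact Metric.infDist_le_dist_of_mem hmem
    linarith
  obtain ⟨S, hS1, hS2⟩ := hres ((z.re : ℂ)) (by simpa using lt_of_le_of_lt hε0 (lt_trans hεd hdD))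
  -- `S` is self-adjoint
  have hSsym : (S : H →ₗ[ℂ] H).IsSymmetric := by
    intro x y
    obtain ⟨hx, hxeq⟩ := hS1 x
    obtain ⟨hy, hyeq⟩ := hS1 y
    simp only [ContinuousLinearMap.coe_coe]
    have e1 : ⟪S x, y⟫ = ⟪S x, (T ⟨S y, hy⟩ : H)⟫ - ((z.re : ℝ) : ℂ) * ⟪S x, S y⟫ := by
      conv_lhs => rw [← hyeq]
      rw [inner_sub_right, inner_smul_right]
    have e2 : ⟪x, S y⟫ = ⟪(T ⟨S x, hx⟩ : H), (S y : H)⟫ - ((z.re : ℝ) : ℂ) * ⟪S x, S y⟫ := by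
      conv_lhs => rw [← hxeq]
      rw [inner_sub_left, inner_smul_left, Complex.conj_ofReal]
    rw [e1, e2, hsymm ⟨S x, hx⟩ ⟨S y, hy⟩]
  have hSsa : IsSelfAdjoint S := hSsym.isSelfAdjoint
  -- spectral bound for `S`
  have hspec : ∀ k ∈ spectrum ℂ S, ‖k‖ ≤ 1 / d := by
    intro k hk
    have hkre : k = (k.re : ℂ) := hSsa.mem_spectrum_eq_re hk
    set u : ℝ := k.re with hu'
    by_contra hku
    push_neg at hku
    have hknorm : ‖k‖ = |u| := by rw [hkre]; rw [Complex.norm_real, Real.norm_eq_abs]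
    rw [hknorm] at hku
    have hu1 : 0 < |u| := lt_trans (one_div_pos.mpr hd0) hku
    have hu0 : u ≠ 0 := fun h => by simp [h] at hu1
    set t : ℝ := u⁻¹ with ht'
    have ht0 : t ≠ 0 := inv_ne_zero hu0
    have hut : (u : ℂ) * (t : ℂ) = 1 := by
      rw [ht', Complex.ofReal_inv, mul_inv_cancel₀ (by exact_mod_cast hu0)]
    have htC : ((t : ℝ) : ℂ) = ((u : ℝ) : ℂ)⁻¹ := by
      rw [ht', Complex.ofReal_inv]
    have huC : ((u : ℝ) : ℂ) ≠ 0 := by exact_mod_cast hu0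
    have h3 : (1 : ℝ) < d * |u| := by
      have := mul_lt_mul_of_pos_right hku hd0
      rw [one_div, inv_mul_cancel₀ (ne_of_gt hd0)] at this
      linarith [this, mul_comm |u| d ▸ this]
    have htd : |t| < d := by
      rw [ht', abs_inv, ← one_div, div_lt_iff₀ hu1]
      nlinarith
    -- `Re z + t` is in the resolvent set
    obtain ⟨R', hR'1, hR'2⟩ := hres ((z.re : ℂ) + (t : ℝ)) (by
      rw [Complex.dist_eq]
      simpa using lt_trans htd hdD)
    -- resolvent identities
    have key1 : ∀ y : H, R' y = S y + (t : ℂ) • S (R' y) := by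
      intro y
      obtain ⟨hy, hyeq⟩ := hR'1 y
      have h1 : (T ⟨R' y, hy⟩ : H) - ((z.re : ℝ) : ℂ) • R' y = y + (t : ℂ) • R' y := by
        have h := sub_eq_iff_eq_add.mp hyeq
        rw [h, add_smul]
        abel
      have h2 := hS2 ⟨R' y, hy⟩
      calc R' y = S ((T ⟨R' y, hy⟩ : H) - ((z.re : ℝ) : ℂ) • R' y) := h2.symm
        _ = S (y + (t : ℂ) • R' y) := by rw [h1]
        _ = S y + (t : ℂ) • S (R' y) := by rw [map_add, map_smul]
    have key2 : ∀ y : H, S y = R' y - (t : ℂ) • R' (S y) := by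
      intro y
      obtain ⟨hy, hyeq⟩ := hS1 y
      have h1 : (T ⟨S y, hy⟩ : H) - (((z.re : ℝ) : ℂ) + ((t : ℝ) : ℂ)) • S y
          = y - (t : ℂ) • S y := by
        have h := sub_eq_iff_eq_add.mp hyeq
        rw [h, add_smul]
        abel
      have h2 := hR'2 ⟨S y, hy⟩
      calc S y = R' ((T ⟨S y, hy⟩ : H) - (((z.re : ℝ) : ℂ) + ((t : ℝ) : ℂ)) • S y) := h2.symm
        _ = R' (y - (t : ℂ) • S y) := by rw [h1]
        _ = R' y - (t : ℂ) • R' (S y) := by rw [map_sub, map_smul]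
    -- explicit inverse for `u•1 - S`
    set B : H →L[ℂ] H := (t : ℂ) • (1 + (t : ℂ) • R') with hB'
    set X : H →L[ℂ] H := (u : ℂ) • 1 - S with hX'
    have htC0 : ((t : ℝ) : ℂ) ≠ 0 := by exact_mod_cast ht0
    have hXB : X * B = 1 := by
      ext y
      have hk1' : S y = R' y - (t : ℂ) • S (R' y) := eq_sub_of_add_eq (key1 y).symm
      simp only [hX', hB', ContinuousLinearMap.mul_apply, ContinuousLinearMap.smul_apply,
        ContinuousLinearMap.one_apply, ContinuousLinearMap.add_apply,
        ContinuousLinearMap.sub_apply, map_add, map_smul, smul_add, smul_sub]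
      rw [hk1']
      match_scalars <;> (rw [htC]; field_simp) <;> ring
    have hBX : B * X = 1 := by
      ext y
      have e2 : (t : ℂ) • R' (S y) = R' y - S y :=
        eq_sub_of_add_eq ((add_comm _ _).trans (add_eq_of_eq_sub (key2 y)))
      have e3 : R' (S y) = ((t : ℝ) : ℂ)⁻¹ • (R' y - S y) := by
        rw [← e2, smul_smul, inv_mul_cancel₀ htC0, one_smul]
      simp only [hX', hB', ContinuousLinearMap.mul_apply, ContinuousLinearMap.smul_apply,
        ContinuousLinearMap.one_apply, ContinuousLinearMap.add_apply,
        ContinuousLinearMap.sub_apply, map_add, map_sub, map_smul, smul_add, smul_sub]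
      rw [e3]
      match_scalars <;> (rw [htC]; field_simp) <;> ring
    have hunit : IsUnit (algebraMap ℂ (H →L[ℂ] H) k - S) := by
      have hkX : algebraMap ℂ (H →L[ℂ] H) k - S = X := by
        rw [hX', hkre, Algebra.algebraMap_eq_smul_one]
      rw [hkX]
      exact ⟨⟨X, B, hXB, hBX⟩, rfl⟩
    exact (spectrum.mem_iff.mp hk) hunit
  -- norm bound for `S`
  have hSrad : (‖S‖₊ : ENNReal) ≤ ENNReal.ofReal (1 / d) := by
    rw [← hSsa.spectralRadius_eq_nnnorm]
    rw [spectralRadius]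
    refine iSup₂_le fun k hk => ?_
    rw [← ENNReal.ofReal_coe_nnreal, coe_nnnorm]
    exact ENNReal.ofReal_le_ofReal (hspec k hk)
  have hSnorm : ‖S‖ ≤ 1 / d := by
    rw [← ENNReal.ofReal_coe_nnreal, coe_nnnorm] at hSrad
    exact (ENNReal.ofReal_le_ofReal_iff (by positivity)).mp hSrad
  -- the contradiction
  have hψS : S v = (ψ : H) := hS2 ψ
  have hineq : n ≤ (1 / d) * (ε * n) := by
    calc n = ‖S v‖ := by rw [hψS]
      _ ≤ ‖S‖ * ‖v‖ := S.le_opNorm v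
      _ ≤ (1 / d) * (ε * n) := by
          rw [hvnorm]
          exact mul_le_mul_of_nonneg_right hSnorm (by positivity)
  have hfin : d * n ≤ ε * n := by
    have h5 := mul_le_mul_of_nonneg_left hineq hd0.le
    rw [← mul_assoc, mul_one_div, div_self (ne_of_gt hd0), one_mul] at h5
    linarith
  nlinarith
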